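/- arXiv:0904.1549 — 3 statements merged into one kernel-verified Lean document; each statement's English description precedes it below -/
import Mathlib

section
/- Jordan's lemma: Let E be a finite-dimensional complex inner product space and let P and Q be two orthogonal projections on E. Then there exists a finite family of nonzero, pairwise orthogonal submodules S₁, …, S_t of E whose (internal orthogonal direct) sum is all of E, such that each S_i has dimension at most 2, each S_i is invariant under both P and Q (i.e., P maps S_i into S_i and Q maps S_i into S_i), and on each two-dimensional S_i the restrictions of P and Q are each projections of rank at most one. -/
open scoped InnerProductSpace
open Module Submodule

private lemma finrank_span_singleton_le' {E : Type*} [NormedAddCommGroup E]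
    [InnerProductSpace ℂ E] (a : E) : finrank ℂ (ℂ ∙ a) ≤ 1 := by
  rcases eq_or_ne a 0 with h | h
  · rw [h, Submodule.span_zero_singleton]
    simp
  · rw [finrank_span_singleton h]

private theorem jordan_aux : ∀ (n : ℕ) (E : Type*) [NormedAddCommGroup E]
    [InnerProductSpace ℂ E] [FiniteDimensional ℂ E],
    Module.finrank ℂ E = n → ∀ (P Q : E →ₗ[ℂ] E),
    (P ∘ₗ P = P) → (∀ x y : E, ⟪P x, y⟫_ℂ = ⟪x, P y⟫_ℂ) →
    (Q ∘ₗ Q = Q) → (∀ x y : E, ⟪Q x, y⟫_ℂ = ⟪x, Q y⟫_ℂ) →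
    ∃ (t : ℕ) (S : Fin t → Submodule ℂ E),
      (∀ i, S i ≠ ⊥) ∧
      (∀ i j, i ≠ j → ∀ x ∈ S i, ∀ y ∈ S j, ⟪x, y⟫_ℂ = 0) ∧
      (⨆ i, S i) = ⊤ ∧
      (∀ i, Module.finrank ℂ (S i) ≤ 2) ∧
      (∀ i, ∀ x ∈ S i, P x ∈ S i) ∧
      (∀ i, ∀ x ∈ S i, Q x ∈ S i) ∧
      (∀ i, Module.finrank ℂ ((S i).map P) ≤ 1 ∧
        Module.finrank ℂ ((S i).map Q) ≤ 1) := by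
  intro n
  induction n using Nat.strong_induction_on with
  | _ n ih =>
  intro E _ _ _ hn P Q hP2 hPsa hQ2 hQsa
  rcases Nat.eq_zero_or_pos n with h0 | h0
  · subst h0
    have hs : Subsingleton E := Module.finrank_zero_iff.mp hn
    refine ⟨0, Fin.elim0, fun i => i.elim0, fun i => i.elim0, ?_, fun i => i.elim0,
      fun i => i.elim0, fun i => i.elim0, fun i => i.elim0⟩
    exact Subsingleton.elim _ _
  · have hnt : Nontrivial E := by
      have : 0 < Module.finrank ℂ E := hn ▸ h0
      exact Module.nontrivial_of_finrank_pos this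
    obtain ⟨μ, hμ⟩ := Module.End.exists_eigenvalue (P + Q)
    obtain ⟨v, hv⟩ := hμ.exists_hasEigenvector
    have hv0 : v ≠ 0 := hv.right
    have heq : P v + Q v = μ • v := by
      have h := hv.apply_eq_smul
      simpa using h
    have hPP : ∀ x, P (P x) = P x := fun x => by
      have := LinearMap.congr_fun hP2 x; simpa using this
    have hQQ : ∀ x, Q (Q x) = Q x := fun x => by
      have := LinearMap.congr_fun hQ2 x; simpa using this
    obtain ⟨S, hne, hdim, hSP, hSQ, hrkP, hrkQ⟩ :
        ∃ S : Submodule ℂ E, S ≠ ⊥ ∧ Module.finrank ℂ S ≤ 2 ∧ (∀ x ∈ S, P x ∈ S) ∧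
          (∀ x ∈ S, Q x ∈ S) ∧ Module.finrank ℂ (S.map P) ≤ 1 ∧
          Module.finrank ℂ (S.map Q) ≤ 1 := by
      by_cases hz : P v = 0 ∧ Q v = 0
      · refine ⟨ℂ ∙ v, ?_, ?_, ?_, ?_, ?_, ?_⟩
        · simpa [Submodule.span_singleton_eq_bot] using hv0
        · rw [finrank_span_singleton hv0]; norm_num
        · intro x hx
          obtain ⟨c, rfl⟩ := Submodule.mem_span_singleton.mp hx
          simp [hz.1]
        · intro x hx
          obtain ⟨c, rfl⟩ := Submodule.mem_span_singleton.mp hx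
          simp [hz.2]
        · have h : (ℂ ∙ v).map P = ⊥ := by
            rw [Submodule.map_span]
            simp [hz.1]
          rw [h, finrank_bot]
          norm_num
        · have h : (ℂ ∙ v).map Q = ⊥ := by
            rw [Submodule.map_span]
            simp [hz.2]
          rw [h, finrank_bot]
          norm_num
      · set S := Submodule.span ℂ ({P v, Q v} : Set E) with hSdef
        have hPvS : P v ∈ S := Submodule.subset_span (by simp)
        have hQvS : Q v ∈ S := Submodule.subset_span (by simp)
        have hQv : Q v = μ • v - P v := by rw [← heq]; abel
        have hPv : P v = μ • v - Q v := by rw [← heq]; abel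
        have hPQv : P (Q v) = μ • P v - P v := by
          rw [hQv]; rw [map_sub, map_smul, hPP]
        have hQPv : Q (P v) = μ • Q v - Q v := by
          rw [hPv]; rw [map_sub, map_smul, hQQ]
        have hmapP : S.map P ≤ ℂ ∙ (P v) := by
          rw [hSdef, Submodule.map_span]
          apply Submodule.span_le.mpr
          rintro _ ⟨x, hx, rfl⟩
          rcases hx with rfl | rfl
          · rw [hPP]; exact Submodule.mem_span_singleton_self _
          · rw [hPQv]
            exact sub_mem (Submodule.smul_mem _ _ (Submodule.mem_span_singleton_self _))
              (Submodule.mem_span_singleton_self _)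
        have hmapQ : S.map Q ≤ ℂ ∙ (Q v) := by
          rw [hSdef, Submodule.map_span]
          apply Submodule.span_le.mpr
          rintro _ ⟨x, hx, rfl⟩
          rcases hx with rfl | rfl
          · rw [hQPv]
            exact sub_mem (Submodule.smul_mem _ _ (Submodule.mem_span_singleton_self _))
              (Submodule.mem_span_singleton_self _)
          · rw [hQQ]; exact Submodule.mem_span_singleton_self _
        refine ⟨S, ?_, ?_, ?_, ?_, ?_, ?_⟩
        · intro h
          apply hz
          constructor
          · exact (Submodule.span_eq_bot.mp h) (P v) (by simp)
          · exact (Submodule.span_eq_bot.mp h) (Q v) (by simp)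
        · have h1 : S = (ℂ ∙ (P v)) ⊔ (ℂ ∙ (Q v)) := by
            rw [hSdef, Submodule.span_insert]
          rw [h1]
          calc Module.finrank ℂ ↥((ℂ ∙ (P v)) ⊔ (ℂ ∙ (Q v)))
              ≤ Module.finrank ℂ ↥(ℂ ∙ (P v)) + Module.finrank ℂ ↥(ℂ ∙ (Q v)) := by
                have := Submodule.finrank_sup_add_finrank_inf_eq (ℂ ∙ (P v)) (ℂ ∙ (Q v))
                omega
            _ ≤ 1 + 1 := add_le_add (finrank_span_singleton_le' _) (finrank_span_singleton_le' _)
        · intro x hx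
          have hle : S ≤ Submodule.comap P S := by
            apply Submodule.span_le.mpr
            rintro y (rfl | rfl)
            · exact Submodule.mem_comap.mpr (by rw [hPP]; exact hPvS)
            · exact Submodule.mem_comap.mpr
                (by rw [hPQv]; exact sub_mem (Submodule.smul_mem _ _ hPvS) hPvS)
          exact hle hx
        · intro x hx
          have hle : S ≤ Submodule.comap Q S := by
            apply Submodule.span_le.mpr
            rintro y (rfl | rfl)
            · exact Submodule.mem_comap.mpr
                (by rw [hQPv]; exact sub_mem (Submodule.smul_mem _ _ hQvS) hQvS)
            · exact Submodule.mem_comap.mpr (by rw [hQQ]; exact hQvS)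
          exact hle hx
        · exact le_trans (Submodule.finrank_mono hmapP) (finrank_span_singleton_le' _)
        · exact le_trans (Submodule.finrank_mono hmapQ) (finrank_span_singleton_le' _)
    -- the orthogonal complement
    have hKP : ∀ x ∈ Sᗮ, P x ∈ Sᗮ := by
      intro x hx
      rw [Submodule.mem_orthogonal] at *
      intro u hu
      rw [← hPsa u x]
      exact hx (P u) (hSP u hu)
    have hKQ : ∀ x ∈ Sᗮ, Q x ∈ Sᗮ := by
      intro x hx
      rw [Submodule.mem_orthogonal] at *
      intro u hu
      rw [← hQsa u x]
      exact hx (Q u) (hSQ u hu)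
    set K := Sᗮ with hKdef
    set P' : K →ₗ[ℂ] K := P.restrict hKP with hP'def
    set Q' : K →ₗ[ℂ] K := Q.restrict hKQ with hQ'def
    have hP'2 : P' ∘ₗ P' = P' := by
      ext x
      exact hPP _
    have hQ'2 : Q' ∘ₗ Q' = Q' := by
      ext x
      exact hQQ _
    have hP'sa : ∀ x y : K, ⟪P' x, y⟫_ℂ = ⟪x, P' y⟫_ℂ := fun x y => hPsa x y
    have hQ'sa : ∀ x y : K, ⟪Q' x, y⟫_ℂ = ⟪x, Q' y⟫_ℂ := fun x y => hQsa x y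
    have hrank : Module.finrank ℂ K < n := by
      have h1 : Module.finrank ℂ S + Module.finrank ℂ K = n := by
        rw [← hn]; exact S.finrank_add_finrank_orthogonal
      have h2 : Module.finrank ℂ S ≠ 0 := fun h => hne (Submodule.finrank_eq_zero.mp h)
      omega
    obtain ⟨t, T, hTne, hTorth, hTsup, hTdim, hTP, hTQ, hTrk⟩ :=
      ih (Module.finrank ℂ K) hrank K rfl P' Q' hP'2 hP'sa hQ'2 hQ'sa
    refine ⟨t + 1, Fin.cons S (fun i => (T i).map K.subtype), ?_, ?_, ?_, ?_, ?_, ?_, ?_⟩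
    · intro i
      refine Fin.cases ?_ ?_ i
      · simpa using hne
      · intro j
        simp only [Fin.cons_succ]
        obtain ⟨x, hx, hx0⟩ := Submodule.ne_bot_iff (T j) |>.mp (hTne j)
        refine Submodule.ne_bot_iff _ |>.mpr ⟨(x : E), Submodule.mem_map_of_mem hx, ?_⟩
        simpa using hx0
    · intro i j hij
      rcases Fin.eq_zero_or_eq_succ i with rfl | ⟨i', rfl⟩ <;>
        rcases Fin.eq_zero_or_eq_succ j with rfl | ⟨j', rfl⟩
      · exact absurd rfl hij
      · intro x hx y hy
        simp only [Fin.cons_zero] at hx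
        simp only [Fin.cons_succ] at hy
        obtain ⟨y', hy', rfl⟩ := hy
        exact (Submodule.mem_orthogonal S _).mp y'.2 x hx
      · intro x hx y hy
        simp only [Fin.cons_succ] at hx
        simp only [Fin.cons_zero] at hy
        obtain ⟨x', hx', rfl⟩ := hx
        rw [inner_eq_zero_symm]
        exact (Submodule.mem_orthogonal S _).mp x'.2 y hy
      · intro x hx y hy
        simp only [Fin.cons_succ] at hx hy
        obtain ⟨x', hx', rfl⟩ := hx
        obtain ⟨y', hy', rfl⟩ := hy
        have hne' : i' ≠ j' := fun h => (by simp [h] at hij)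
        exact hTorth i' j' hne' x' hx' y' hy'
    · apply eq_top_iff.mpr
      have hsup : S ⊔ Sᗮ = ⊤ := Submodule.sup_orthogonal_of_hasOrthogonalProjection
      rw [← hsup]
      apply sup_le
      · simpa using le_iSup (Fin.cons S fun i => (T i).map K.subtype) 0
      · have hK : K = ⨆ i, (T i).map K.subtype := by
          rw [← Submodule.map_iSup, hTsup, Submodule.map_subtype_top]
        have h3 : (⨆ i, (T i).map K.subtype) ≤
            ⨆ i, Fin.cons S (fun i => (T i).map K.subtype) i :=
          iSup_le fun i => by
            simpa using le_iSup (Fin.cons S fun i => (T i).map K.subtype) i.succ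
        exact hK.trans_le h3
    · intro i
      refine Fin.cases ?_ ?_ i
      · rw [Fin.cons_zero]
        exact hdim
      · intro j
        rw [Fin.cons_succ, Submodule.finrank_map_subtype_eq]
        exact hTdim j
    · intro i
      refine Fin.cases ?_ ?_ i
      · intro x hx
        simp only [Fin.cons_zero] at hx ⊢
        exact hSP x hx
      · intro j x hx
        simp only [Fin.cons_succ] at hx ⊢
        obtain ⟨y, hy, rfl⟩ := hx
        exact ⟨P' y, hTP j y hy, rfl⟩
    · intro i
      refine Fin.cases ?_ ?_ i
      · intro x hx
        simp only [Fin.cons_zero] at hx ⊢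
        exact hSQ x hx
      · intro j x hx
        simp only [Fin.cons_succ] at hx ⊢
        obtain ⟨y, hy, rfl⟩ := hx
        exact ⟨Q' y, hTQ j y hy, rfl⟩
    · intro i
      refine Fin.cases ?_ ?_ i
      · rw [Fin.cons_zero]
        exact ⟨hrkP, hrkQ⟩
      · intro j
        rw [Fin.cons_succ]
        have hcP : P ∘ₗ K.subtype = K.subtype ∘ₗ P' := by ext x; rfl
        have hcQ : Q ∘ₗ K.subtype = K.subtype ∘ₗ Q' := by ext x; rfl
        have h1 : ((T j).map K.subtype).map P = ((T j).map P').map K.subtype := by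
          rw [← Submodule.map_comp, hcP, Submodule.map_comp]
        have h2 : ((T j).map K.subtype).map Q = ((T j).map Q').map K.subtype := by
          rw [← Submodule.map_comp, hcQ, Submodule.map_comp]
        rw [h1, h2, Submodule.finrank_map_subtype_eq, Submodule.finrank_map_subtype_eq]
        exact hTrk j

/-- Jordan's lemma: given two orthogonal projections `P` and `Q` on a
finite-dimensional complex inner product space `E`, the space decomposes into
nonzero, pairwise orthogonal subspaces of dimension at most 2, each invariant
under both `P` and `Q`, on which (in the two-dimensional case) the restrictions
of `P` and `Q` are projections of rank at most one. -/
theorem jordan_lemma (E : Type*) [NormedAddCommGroup E] [InnerProductSpace ℂ E]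
    [FiniteDimensional ℂ E]
    (P Q : E →ₗ[ℂ] E)
    (hP2 : P ∘ₗ P = P) (hPsa : ∀ x y : E, ⟪P x, y⟫_ℂ = ⟪x, P y⟫_ℂ)
    (hQ2 : Q ∘ₗ Q = Q) (hQsa : ∀ x y : E, ⟪Q x, y⟫_ℂ = ⟪x, Q y⟫_ℂ) :
    ∃ (t : ℕ) (S : Fin t → Submodule ℂ E),
      (∀ i, S i ≠ ⊥) ∧
      (∀ i j, i ≠ j → ∀ x ∈ S i, ∀ y ∈ S j, ⟪x, y⟫_ℂ = 0) ∧
      (⨆ i, S i) = ⊤ ∧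
      (∀ i, Module.finrank ℂ (S i) ≤ 2) ∧
      (∀ i, ∀ x ∈ S i, P x ∈ S i) ∧
      (∀ i, ∀ x ∈ S i, Q x ∈ S i) ∧
      (∀ i, Module.finrank ℂ (S i) = 2 →
        Module.finrank ℂ ((S i).map P) ≤ 1 ∧
        Module.finrank ℂ ((S i).map Q) ≤ 1) := by
  obtain ⟨t, S, h1, h2, h3, h4, h5, h6, h7⟩ :=
    jordan_aux (Module.finrank ℂ E) E rfl P Q hP2 hPsa hQ2 hQsa
  exact ⟨t, S, h1, h2, h3, h4, h5, h6, fun i _ => h7 i⟩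
end

section
/- Product of two reflections (full decomposition form): Let E be a finite-dimensional complex inner product space, let P and Q be orthogonal projections on E, let F₀ = 2P − id and F₁ = 2Q − id be the reflections about their supports, and let W = F₁ ∘ F₀. Then there exists a finite family of nonzero, pairwise orthogonal submodules of E whose sum is all of E, each invariant under W, such that each submodule either (i) is one-dimensional and W acts on it as multiplication by 1 or by −1, or (ii) is two-dimensional and there exists θ ∈ (0, π/2) such that the restriction of W to it has eigenvalues exp(2iθ) and exp(−2iθ). -/
open scoped InnerProductSpace

/-- The decomposition conclusion, abstracted over the operator `W`. -/
abbrev ReflDecomp (E : Type*) [NormedAddCommGroup E] [InnerProductSpace ℂ E]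
    (W : E →ₗ[ℂ] E) : Prop :=
  ∃ (t : ℕ) (S : Fin t → Submodule ℂ E),
      (∀ i, S i ≠ ⊥) ∧
      (∀ i j, i ≠ j → ∀ x ∈ S i, ∀ y ∈ S j, ⟪x, y⟫_ℂ = 0) ∧
      (⨆ i, S i) = ⊤ ∧
      (∀ i, ∀ x ∈ S i, W x ∈ S i) ∧
      (∀ i,
        (Module.finrank ℂ (S i) = 1 ∧
          ((∀ x ∈ S i, W x = x) ∨ (∀ x ∈ S i, W x = -x))) ∨
        (Module.finrank ℂ (S i) = 2 ∧
          ∃ θ : ℝ, θ ∈ Set.Ioo 0 (Real.pi / 2) ∧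
            (∃ x ∈ S i, x ≠ 0 ∧ W x = Complex.exp (2 * θ * Complex.I) • x) ∧
            (∃ x ∈ S i, x ≠ 0 ∧ W x = Complex.exp (-(2 * θ * Complex.I)) • x)))

/-- The per-piece dichotomy for a single submodule `L`. -/
abbrev PieceProp (E : Type*) [NormedAddCommGroup E] [InnerProductSpace ℂ E]
    (W : E →ₗ[ℂ] E) (L : Submodule ℂ E) : Prop :=
  (Module.finrank ℂ L = 1 ∧
    ((∀ x ∈ L, W x = x) ∨ (∀ x ∈ L, W x = -x))) ∨
  (Module.finrank ℂ L = 2 ∧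
    ∃ θ : ℝ, θ ∈ Set.Ioo 0 (Real.pi / 2) ∧
      (∃ x ∈ L, x ≠ 0 ∧ W x = Complex.exp (2 * θ * Complex.I) • x) ∧
      (∃ x ∈ L, x ≠ 0 ∧ W x = Complex.exp (-(2 * θ * Complex.I)) • x))

theorem refl_decomp_aux : ∀ (n : ℕ) (E : Type u) [NormedAddCommGroup E]
    [InnerProductSpace ℂ E] [FiniteDimensional ℂ E] (F₀ F₁ : E →ₗ[ℂ] E),
    Module.finrank ℂ E = n →
    (∀ x, F₀ (F₀ x) = x) → (∀ x y : E, ⟪F₀ x, y⟫_ℂ = ⟪x, F₀ y⟫_ℂ) →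
    (∀ x, F₁ (F₁ x) = x) → (∀ x y : E, ⟪F₁ x, y⟫_ℂ = ⟪x, F₁ y⟫_ℂ) →
    ReflDecomp E (F₁ ∘ₗ F₀) := by
  intro n
  induction n using Nat.strong_induction_on with
  | _ n IH =>
  intro E _ _ _ F₀ F₁ hn h₀ hsa₀ h₁ hsa₁
  set W : E →ₗ[ℂ] E := F₁ ∘ₗ F₀ with hWdef
  have hWapp : ∀ x : E, W x = F₁ (F₀ x) := fun x => rfl
  rcases Nat.eq_zero_or_pos n with hn0 | hnpos
  · -- trivial space
    subst hn0
    have hsub : Subsingleton E := Module.finrank_zero_iff.mp hn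
    refine ⟨0, Fin.elim0, fun i => i.elim0, fun i => i.elim0, ?_, fun i => i.elim0,
      fun i => i.elim0⟩
    rw [eq_top_iff]
    intro x _
    rw [Subsingleton.elim x 0]
    exact zero_mem _
  -- main step: the key assembly lemma
  have key : ∀ L : Submodule ℂ E, L ≠ ⊥ → (∀ x ∈ L, W x ∈ L) → (∀ x ∈ L, F₀ x ∈ L) →
      PieceProp E W L → ReflDecomp E W := by
    intro L hL0 hWL hF₀L hdich
    have hF₁L : ∀ x ∈ L, F₁ x ∈ L := by
      intro x hx
      have := hWL (F₀ x) (hF₀L x hx)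
      rwa [hWapp, h₀ x] at this
    set K := Lᗮ with hKdef
    have hmemK : ∀ x : E, x ∈ K ↔ ∀ u ∈ L, ⟪u, x⟫_ℂ = 0 := fun x => Submodule.mem_orthogonal L x
    have hF₀K : ∀ x ∈ K, F₀ x ∈ K := by
      intro x hx
      rw [hmemK] at hx ⊢
      intro u hu
      rw [← hsa₀ u x]
      exact hx (F₀ u) (hF₀L u hu)
    have hF₁K : ∀ x ∈ K, F₁ x ∈ K := by
      intro x hx
      rw [hmemK] at hx ⊢
      intro u hu
      rw [← hsa₁ u x]
      exact hx (F₁ u) (hF₁L u hu)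
    set G₀ : K →ₗ[ℂ] K := F₀.restrict hF₀K with hG₀def
    set G₁ : K →ₗ[ℂ] K := F₁.restrict hF₁K with hG₁def
    have hG₀coe : ∀ x : K, (G₀ x : E) = F₀ x := fun x => rfl
    have hG₁coe : ∀ x : K, (G₁ x : E) = F₁ x := fun x => rfl
    have hG₀2 : ∀ x : K, G₀ (G₀ x) = x := by
      intro x; apply Subtype.ext; rw [hG₀coe, hG₀coe]; exact h₀ x
    have hG₁2 : ∀ x : K, G₁ (G₁ x) = x := by
      intro x; apply Subtype.ext; rw [hG₁coe, hG₁coe]; exact h₁ x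
    have hsaG₀ : ∀ x y : K, ⟪G₀ x, y⟫_ℂ = ⟪x, G₀ y⟫_ℂ := by
      intro x y
      rw [Submodule.coe_inner, Submodule.coe_inner, hG₀coe, hG₀coe]
      exact hsa₀ x y
    have hsaG₁ : ∀ x y : K, ⟪G₁ x, y⟫_ℂ = ⟪x, G₁ y⟫_ℂ := by
      intro x y
      rw [Submodule.coe_inner, Submodule.coe_inner, hG₁coe, hG₁coe]
      exact hsa₁ x y
    have hWres : ∀ x : K, ((G₁ ∘ₗ G₀) x : E) = W (x : E) := fun x => rfl
    have hrank : Module.finrank ℂ L + Module.finrank ℂ K = n := by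
      rw [← hn]; exact L.finrank_add_finrank_orthogonal
    have hLpos : 0 < Module.finrank ℂ L := by
      rcases Nat.eq_zero_or_pos (Module.finrank ℂ L) with h | h
      · exact absurd (Submodule.finrank_eq_zero.mp h) hL0
      · exact h
    have hKlt : Module.finrank ℂ K < n := by omega
    obtain ⟨t, S', hS1, hS2, hS3, hS4, hS5⟩ :=
      IH (Module.finrank ℂ K) hKlt K G₀ G₁ rfl hG₀2 hsaG₀ hG₁2 hsaG₁
    refine ⟨t + 1, Fin.cons L (fun i => (S' i).map K.subtype), ?_, ?_, ?_, ?_, ?_⟩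
    · -- nonbot
      intro i
      rcases Fin.eq_zero_or_eq_succ i with rfl | ⟨j, rfl⟩
      · exact hL0
      · show (S' j).map K.subtype ≠ ⊥
        intro hbot
        apply hS1 j
        rw [← le_bot_iff]
        intro x hx
        have hmem : (x : E) ∈ (S' j).map K.subtype := ⟨x, hx, rfl⟩
        rw [hbot] at hmem
        have : (x : E) = 0 := hmem
        exact (Submodule.mem_bot ℂ).mpr (Subtype.ext this)
    · -- pairwise orthogonal
      have horthLK : ∀ x ∈ L, ∀ y : E, y ∈ K → ⟪x, y⟫_ℂ = 0 := by
        intro x hx y hy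
        exact ((hmemK y).mp hy) x hx
      intro i j hij
      rcases Fin.eq_zero_or_eq_succ i with rfl | ⟨i', rfl⟩ <;>
        rcases Fin.eq_zero_or_eq_succ j with rfl | ⟨j', rfl⟩
      · exact absurd rfl hij
      · intro x hx y hy
        replace hx : x ∈ L := hx
        replace hy : y ∈ (S' j').map K.subtype := hy
        obtain ⟨y', _, rfl⟩ := hy
        exact horthLK x hx _ y'.2
      · intro x hx y hy
        replace hx : x ∈ (S' i').map K.subtype := hx
        replace hy : y ∈ L := hy
        obtain ⟨x', _, rfl⟩ := hx
        rw [inner_eq_zero_symm]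
        exact horthLK y hy _ x'.2
      · intro x hx y hy
        replace hx : x ∈ (S' i').map K.subtype := hx
        replace hy : y ∈ (S' j').map K.subtype := hy
        obtain ⟨x', hx', rfl⟩ := hx
        obtain ⟨y', hy', rfl⟩ := hy
        have hij' : i' ≠ j' := fun h => hij (by rw [h])
        exact hS2 i' j' hij' x' hx' y' hy'
    · -- sup = top
      rw [eq_top_iff, ← Submodule.sup_orthogonal_of_hasOrthogonalProjection (K := L)]
      apply sup_le
      · exact le_iSup_of_le 0 le_rfl
      · have hLbot : Lᗮ = Submodule.map K.subtype ⊤ := by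
          rw [Submodule.map_top, Submodule.range_subtype]
        rw [hLbot, ← hS3, Submodule.map_iSup]
        apply iSup_le
        intro i'
        exact le_iSup_of_le i'.succ le_rfl
    · -- invariance
      intro i
      rcases Fin.eq_zero_or_eq_succ i with rfl | ⟨j, rfl⟩
      · exact hWL
      · intro x hx
        replace hx : x ∈ (S' j).map K.subtype := hx
        obtain ⟨x', hx', rfl⟩ := hx
        show W (x' : E) ∈ (S' j).map K.subtype
        exact ⟨(G₁ ∘ₗ G₀) x', hS4 j x' hx', rfl⟩
    · -- dichotomy
      intro i
      rcases Fin.eq_zero_or_eq_succ i with rfl | ⟨j, rfl⟩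
      · exact hdich
      · show PieceProp E W ((S' j).map K.subtype)
        rcases hS5 j with ⟨hd, hcase⟩ | ⟨hd, θ, hθ, ⟨x₁, hx₁S, hx₁0, hx₁W⟩, ⟨x₂, hx₂S, hx₂0, hx₂W⟩⟩
        · left
          refine ⟨(Submodule.finrank_map_subtype_eq K (S' j)).trans hd, ?_⟩
          rcases hcase with hc | hc
          · left
            intro x hx
            obtain ⟨x', hx', rfl⟩ := hx
            calc W (x' : E) = ((G₁ ∘ₗ G₀) x' : E) := rfl
              _ = (x' : E) := by rw [hc x' hx']
          · right
            intro x hx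
            obtain ⟨x', hx', rfl⟩ := hx
            calc W (x' : E) = ((G₁ ∘ₗ G₀) x' : E) := rfl
              _ = -(x' : E) := by rw [hc x' hx']; rfl
        · right
          refine ⟨(Submodule.finrank_map_subtype_eq K (S' j)).trans hd, θ, hθ, ?_, ?_⟩
          · refine ⟨x₁, ⟨x₁, hx₁S, rfl⟩, fun h => hx₁0 (Subtype.ext h), ?_⟩
            calc W (x₁ : E) = ((G₁ ∘ₗ G₀) x₁ : E) := rfl
              _ = Complex.exp (2 * θ * Complex.I) • (x₁ : E) := by rw [hx₁W]; rfl
          · refine ⟨x₂, ⟨x₂, hx₂S, rfl⟩, fun h => hx₂0 (Subtype.ext h), ?_⟩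
            calc W (x₂ : E) = ((G₁ ∘ₗ G₀) x₂ : E) := rfl
              _ = Complex.exp (-(2 * θ * Complex.I)) • (x₂ : E) := by rw [hx₂W]; rfl
  -- now find an eigenvector and build a suitable L
  haveI : Nontrivial E := Module.finrank_pos_iff.mp (hn ▸ hnpos)
  have hqW : ∀ x y : E, ⟪W x, W y⟫_ℂ = ⟪x, y⟫_ℂ := by
    intro x y
    rw [hWapp, hWapp, hsa₁, h₁, hsa₀, h₀]
  obtain ⟨l, hl⟩ := Module.End.exists_eigenvalue (W : Module.End ℂ E)
  obtain ⟨v, hv⟩ := hl.exists_hasEigenvector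
  have hv0 : v ≠ 0 := hv.2
  have hWv : W v = l • v := hv.apply_eq_smul
  have hvv : ⟪v, v⟫_ℂ ≠ 0 := inner_self_ne_zero.mpr hv0
  have hconj : (starRingEnd ℂ) l * l = 1 := by
    have h2 := hqW v v
    rw [hWv, inner_smul_left, inner_smul_right, ← mul_assoc] at h2
    have h3 : (starRingEnd ℂ) l * l * ⟪v, v⟫_ℂ = 1 * ⟪v, v⟫_ℂ := by rw [h2, one_mul]
    exact mul_right_cancel₀ hvv h3
  have hl0 : l ≠ 0 := by
    intro h
    rw [h, mul_zero] at hconj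
    exact zero_ne_one hconj
  set w := F₀ v with hwdef
  have hw0 : w ≠ 0 := by
    intro h
    apply hv0
    rw [← h₀ v, ← hwdef, h, map_zero]
  have hF₁v : F₁ v = l⁻¹ • w := by
    have h2 : F₁ (F₁ (F₀ v)) = F₁ (l • v) := by rw [← hWapp, hWv]
    rw [h₁, map_smul, ← hwdef] at h2
    rw [h2, smul_smul, inv_mul_cancel₀ hl0, one_smul]
  have hWw : W w = l⁻¹ • w := by rw [hWapp, h₀, hF₁v]
  have hinv_conj : l⁻¹ = (starRingEnd ℂ) l :=
    inv_eq_of_mul_eq_one_left hconj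
  by_cases him : l.im = 0
  · -- real eigenvalue: l = ±1
    have hconjl : (starRingEnd ℂ) l = l := Complex.conj_eq_iff_im.mpr him
    have hll : l * l = 1 := by rw [← hconj, hconjl]
    have hl1 : l = 1 ∨ l = -1 := mul_self_eq_one_iff.mp hll
    have hlinv : l⁻¹ = l := by rw [hinv_conj, hconjl]
    have hWw' : W w = l • w := by rw [hWw, hlinv]
    obtain ⟨v', ε, hv'0, hWv', hF₀v'⟩ :
        ∃ (v' : E) (ε : ℂ), v' ≠ 0 ∧ W v' = l • v' ∧ F₀ v' = ε • v' := by
      by_cases hvw : v + w = 0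
      · refine ⟨v, -1, hv0, hWv, ?_⟩
        have hwv : w = -v := eq_neg_of_add_eq_zero_right hvw
        rw [show F₀ v = w from rfl, hwv, neg_smul, one_smul]
      · refine ⟨v + w, 1, hvw, ?_, ?_⟩
        · rw [map_add, hWv, hWw', smul_add]
        · rw [one_smul, map_add]
          calc F₀ v + F₀ w = w + v := by rw [show F₀ v = w from rfl, hwdef, h₀]
            _ = v + w := add_comm w v
    apply key (Submodule.span ℂ {v'})
    · rw [Ne, Submodule.span_singleton_eq_bot]
      exact hv'0
    · intro x hx
      obtain ⟨a, rfl⟩ := Submodule.mem_span_singleton.mp hx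
      rw [map_smul, hWv']
      exact Submodule.smul_mem _ _ (Submodule.smul_mem _ _
        (Submodule.mem_span_singleton_self v'))
    · intro x hx
      obtain ⟨a, rfl⟩ := Submodule.mem_span_singleton.mp hx
      rw [map_smul, hF₀v']
      exact Submodule.smul_mem _ _ (Submodule.smul_mem _ _
        (Submodule.mem_span_singleton_self v'))
    · left
      refine ⟨finrank_span_singleton hv'0, ?_⟩
      rcases hl1 with rfl | rfl
      · left
        intro x hx
        obtain ⟨a, rfl⟩ := Submodule.mem_span_singleton.mp hx
        rw [map_smul, hWv', one_smul]
      · right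
        intro x hx
        obtain ⟨a, rfl⟩ := Submodule.mem_span_singleton.mp hx
        rw [map_smul, hWv']
        simp
  · -- genuinely complex eigenvalue
    have hWw'' : W w = (starRingEnd ℂ) l • w := by rw [hWw, hinv_conj]
    have horth : ⟪v, w⟫_ℂ = 0 := by
      by_contra hne
      have h2 := hqW v w
      rw [hWv, hWw, inner_smul_left, inner_smul_right, ← mul_assoc] at h2
      have h3 : (starRingEnd ℂ) l * l⁻¹ = 1 := by
        have h4 : (starRingEnd ℂ) l * l⁻¹ * ⟪v, w⟫_ℂ = 1 * ⟪v, w⟫_ℂ := by rw [h2, one_mul]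
        exact mul_right_cancel₀ hne h4
      rw [← hinv_conj] at h3
      have h5 : l * l = 1 := by
        rw [← mul_inv] at h3
        exact inv_eq_one.mp h3
      rcases mul_self_eq_one_iff.mp h5 with rfl | rfl <;> simp at him
    have hindep : LinearIndependent ℂ ![v, w] := by
      rw [LinearIndependent.pair_iff]
      intro s t hst
      have h2 : ⟪v, s • v + t • w⟫_ℂ = 0 := by rw [hst, inner_zero_right]
      rw [inner_add_right, inner_smul_right, inner_smul_right, horth, mul_zero,
        add_zero] at h2
      have hs : s = 0 := by
        rcases mul_eq_zero.mp h2 with h | h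
        · exact h
        · exact absurd h hvv
      refine ⟨hs, ?_⟩
      rw [hs, zero_smul, zero_add] at hst
      rcases smul_eq_zero.mp hst with h | h
      · exact h
      · exact absurd h hw0
    set L := Submodule.span ℂ ({v, w} : Set E) with hLdef
    have hvL : v ∈ L := Submodule.subset_span (Set.mem_insert _ _)
    have hwL : w ∈ L := Submodule.subset_span (Set.mem_insert_of_mem _ rfl)
    have hgen : ∀ x ∈ L, ∀ (T : E →ₗ[ℂ] E), T v ∈ L → T w ∈ L → T x ∈ L := by
      intro x hx T hTv hTw
      have hle : L ≤ L.comap T := by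
        rw [hLdef, Submodule.span_le]
        intro z hz
        rcases hz with rfl | hz
        · exact hTv
        · rw [Set.mem_singleton_iff] at hz
          subst hz
          exact hTw
      exact hle hx
    have hrange : ({v, w} : Set E) = Set.range ![v, w] :=
      (Matrix.range_cons_cons_empty v w _).symm
    have hdim2 : Module.finrank ℂ L = 2 := by
      rw [hLdef, hrange, finrank_span_eq_card hindep, Fintype.card_fin]
    -- the angle
    have habs : ‖l‖ = 1 := by
      have h2 : l * (starRingEnd ℂ) l = 1 := by rw [mul_comm]; exact hconj
      rw [Complex.mul_conj] at h2
      have h3 : Complex.normSq l = 1 := by exact_mod_cast h2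
      rw [Complex.norm_def, h3, Real.sqrt_one]
    have hlexp : Complex.exp ((l.arg : ℂ) * Complex.I) = l := by
      conv_rhs => rw [← Complex.norm_mul_exp_arg_mul_I l]
      rw [habs, Complex.ofReal_one, one_mul]
    have hsin : Real.sin l.arg ≠ 0 := by
      rw [Complex.sin_arg, habs, div_one]
      exact him
    have hφ0 : l.arg ≠ 0 := fun h => hsin (by rw [h, Real.sin_zero])
    have hφpi : l.arg ≠ Real.pi := fun h => hsin (by rw [h, Real.sin_pi])
    have hφlt : l.arg < Real.pi := lt_of_le_of_ne (Complex.arg_le_pi l) hφpi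
    have hφgt : -Real.pi < l.arg := Complex.neg_pi_lt_arg l
    have hcexp : Complex.exp (-((l.arg : ℂ) * Complex.I)) = (starRingEnd ℂ) l := by
      have h2 := congrArg (starRingEnd ℂ) hlexp
      rw [← Complex.exp_conj, map_mul, Complex.conj_ofReal, Complex.conj_I] at h2
      rw [← h2]
      congr 1
      ring
    rcases lt_or_gt_of_ne hφ0 with hneg | hpos
    · -- arg < 0 : use θ = -arg/2
      apply key L
      · rw [Ne, hLdef, Submodule.span_eq_bot]
        push_neg
        exact ⟨v, Set.mem_insert _ _, hv0⟩
      · intro x hx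
        apply hgen x hx W
        · rw [hWv]; exact Submodule.smul_mem _ _ hvL
        · rw [hWw'']; exact Submodule.smul_mem _ _ hwL
      · intro x hx
        apply hgen x hx F₀
        · exact hwL
        · rw [hwdef, h₀]; exact hvL
      · right
        refine ⟨hdim2, -l.arg / 2, ⟨by linarith, by linarith⟩, ?_, ?_⟩
        · refine ⟨w, hwL, hw0, ?_⟩
          have he : Complex.exp (2 * ((-l.arg / 2 : ℝ) : ℂ) * Complex.I)
              = (starRingEnd ℂ) l := by
            rw [show (2 * ((-l.arg / 2 : ℝ) : ℂ) * Complex.I)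
                = -((l.arg : ℂ) * Complex.I) from by push_cast; ring]
            exact hcexp
          rw [he]
          exact hWw''
        · refine ⟨v, hvL, hv0, ?_⟩
          have he : Complex.exp (-(2 * ((-l.arg / 2 : ℝ) : ℂ) * Complex.I)) = l := by
            rw [show (-(2 * ((-l.arg / 2 : ℝ) : ℂ) * Complex.I))
                = ((l.arg : ℂ) * Complex.I) from by push_cast; ring]
            exact hlexp
          rw [he]
          exact hWv
    · -- arg > 0 : use θ = arg/2
      apply key L
      · rw [Ne, hLdef, Submodule.span_eq_bot]
        push_neg
        exact ⟨v, Set.mem_insert _ _, hv0⟩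
      · intro x hx
        apply hgen x hx W
        · rw [hWv]; exact Submodule.smul_mem _ _ hvL
        · rw [hWw'']; exact Submodule.smul_mem _ _ hwL
      · intro x hx
        apply hgen x hx F₀
        · exact hwL
        · rw [hwdef, h₀]; exact hvL
      · right
        refine ⟨hdim2, l.arg / 2, ⟨by linarith, by linarith⟩, ?_, ?_⟩
        · refine ⟨v, hvL, hv0, ?_⟩
          have he : Complex.exp (2 * ((l.arg / 2 : ℝ) : ℂ) * Complex.I) = l := by
            rw [show (2 * ((l.arg / 2 : ℝ) : ℂ) * Complex.I)
                = ((l.arg : ℂ) * Complex.I) from by push_cast; ring]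
            exact hlexp
          rw [he]
          exact hWv
        · refine ⟨w, hwL, hw0, ?_⟩
          have he : Complex.exp (-(2 * ((l.arg / 2 : ℝ) : ℂ) * Complex.I))
              = (starRingEnd ℂ) l := by
            rw [show (-(2 * ((l.arg / 2 : ℝ) : ℂ) * Complex.I))
                = -((l.arg : ℂ) * Complex.I) from by push_cast; ring]
            exact hcexp
          rw [he]
          exact hWw''

/-- Product of two reflections (full decomposition form): for two orthogonal
projections `P`, `Q` on a finite-dimensional complex inner product space, with
reflections `F₀ = 2P - id`, `F₁ = 2Q - id` and `W = F₁ ∘ F₀`, the space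
decomposes into nonzero pairwise orthogonal `W`-invariant subspaces, each of
which is either one-dimensional with `W` acting as `±1`, or two-dimensional
with `W` having eigenvalues `exp(±2iθ)` for some `θ ∈ (0, π/2)`. -/
theorem product_of_two_reflections_decomposition
    (E : Type*) [NormedAddCommGroup E] [InnerProductSpace ℂ E]
    [FiniteDimensional ℂ E]
    (P Q : E →ₗ[ℂ] E)
    (hP2 : P ∘ₗ P = P) (hPsa : ∀ x y : E, ⟪P x, y⟫_ℂ = ⟪x, P y⟫_ℂ)
    (hQ2 : Q ∘ₗ Q = Q) (hQsa : ∀ x y : E, ⟪Q x, y⟫_ℂ = ⟪x, Q y⟫_ℂ)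
    (F₀ F₁ W : E →ₗ[ℂ] E)
    (hF₀ : F₀ = (2 : ℂ) • P - LinearMap.id)
    (hF₁ : F₁ = (2 : ℂ) • Q - LinearMap.id)
    (hW : W = F₁ ∘ₗ F₀) :
    ∃ (t : ℕ) (S : Fin t → Submodule ℂ E),
      (∀ i, S i ≠ ⊥) ∧
      (∀ i j, i ≠ j → ∀ x ∈ S i, ∀ y ∈ S j, ⟪x, y⟫_ℂ = 0) ∧
      (⨆ i, S i) = ⊤ ∧
      (∀ i, ∀ x ∈ S i, W x ∈ S i) ∧
      (∀ i,
        (Module.finrank ℂ (S i) = 1 ∧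
          ((∀ x ∈ S i, W x = x) ∨ (∀ x ∈ S i, W x = -x))) ∨
        (Module.finrank ℂ (S i) = 2 ∧
          ∃ θ : ℝ, θ ∈ Set.Ioo 0 (Real.pi / 2) ∧
            (∃ x ∈ S i, x ≠ 0 ∧ W x = Complex.exp (2 * θ * Complex.I) • x) ∧
            (∃ x ∈ S i, x ≠ 0 ∧ W x = Complex.exp (-(2 * θ * Complex.I)) • x))) := by
  have hP : ∀ x : E, P (P x) = P x := fun x => LinearMap.ext_iff.mp hP2 x
  have hQ : ∀ x : E, Q (Q x) = Q x := fun x => LinearMap.ext_iff.mp hQ2 x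
  have h₀ : ∀ x, F₀ (F₀ x) = x := by
    intro x
    simp only [hF₀, LinearMap.sub_apply, LinearMap.smul_apply, LinearMap.id_apply,
      map_sub, map_smul, hP]
    module
  have h₁ : ∀ x, F₁ (F₁ x) = x := by
    intro x
    simp only [hF₁, LinearMap.sub_apply, LinearMap.smul_apply, LinearMap.id_apply,
      map_sub, map_smul, hQ]
    module
  have hsa₀ : ∀ x y : E, ⟪F₀ x, y⟫_ℂ = ⟪x, F₀ y⟫_ℂ := by
    intro x y
    simp only [hF₀, LinearMap.sub_apply, LinearMap.smul_apply, LinearMap.id_apply,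
      inner_sub_left, inner_sub_right, inner_smul_left, inner_smul_right, hPsa x y]
    rw [show (starRingEnd ℂ) 2 = 2 by norm_num [Complex.ext_iff]]
  have hsa₁ : ∀ x y : E, ⟪F₁ x, y⟫_ℂ = ⟪x, F₁ y⟫_ℂ := by
    intro x y
    simp only [hF₁, LinearMap.sub_apply, LinearMap.smul_apply, LinearMap.id_apply,
      inner_sub_left, inner_sub_right, inner_smul_left, inner_smul_right, hQsa x y]
    rw [show (starRingEnd ℂ) 2 = 2 by norm_num [Complex.ext_iff]]
  subst hW
  exact refl_decomp_aux (Module.finrank ℂ E) E F₀ F₁ rfl h₀ hsa₀ h₁ hsa₁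
end

section
/- Product of two reflections in a two-dimensional subspace: Let E be a complex inner product space, let θ ∈ (0, π/2), let v and v⊥ be orthonormal vectors in E, and set w = (cos θ)·v + (sin θ)·v⊥. Let P be the orthogonal projection of E onto the span of v and Q the orthogonal projection onto the span of w, and let W = (2Q − id) ∘ (2P − id). Then W(v − i·v⊥) = exp(2iθ)·(v − i·v⊥) and W(v + i·v⊥) = exp(−2iθ)·(v + i·v⊥); in particular exp(2iθ) and exp(−2iθ) are eigenvalues of W, and v = ((v + i·v⊥) + (v − i·v⊥))/2 is an equal-weight superposition of the two corresponding eigenvectors. -/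
open scoped InnerProductSpace

/-- The rank-one orthogonal projection onto the span of a unit vector `u`:
the map `x ↦ ⟪u, x⟫ • u` (inner product conjugate-linear in the first slot). -/
noncomputable def rankOneProj {E : Type*} [NormedAddCommGroup E]
    [InnerProductSpace ℂ E] (u : E) : E →ₗ[ℂ] E where
  toFun x := ⟪u, x⟫_ℂ • u
  map_add' x y := by simp [inner_add_right, add_smul]
  map_smul' c x := by simp [inner_smul_right, smul_smul]

/-- Product of two reflections in a two-dimensional subspace: with `v`, `v⊥`
orthonormal, `w = cos θ • v + sin θ • v⊥`, `P`, `Q` the projections onto the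
spans of `v`, `w`, and `W = (2Q - id) ∘ (2P - id)`, the vectors `v ∓ i v⊥` are
eigenvectors of `W` with eigenvalues `exp(±2iθ)`, and `v` is their
equal-weight superposition. -/
theorem product_of_two_reflections_2d
    (E : Type*) [NormedAddCommGroup E] [InnerProductSpace ℂ E]
    (θ : ℝ) (hθ : θ ∈ Set.Ioo 0 (Real.pi / 2))
    (v vperp : E) (hv : ‖v‖ = 1) (hvperp : ‖vperp‖ = 1)
    (horth : ⟪v, vperp⟫_ℂ = 0)
    (w : E) (hw : w = (Real.cos θ : ℂ) • v + (Real.sin θ : ℂ) • vperp)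
    (W : E →ₗ[ℂ] E)
    (hW : W = ((2 : ℂ) • rankOneProj w - LinearMap.id) ∘ₗ
              ((2 : ℂ) • rankOneProj v - LinearMap.id)) :
    W (v - Complex.I • vperp) =
        Complex.exp (2 * θ * Complex.I) • (v - Complex.I • vperp) ∧
    W (v + Complex.I • vperp) =
        Complex.exp (-(2 * θ * Complex.I)) • (v + Complex.I • vperp) ∧
    Module.End.HasEigenvalue (W : Module.End ℂ E) (Complex.exp (2 * θ * Complex.I)) ∧
    Module.End.HasEigenvalue (W : Module.End ℂ E) (Complex.exp (-(2 * θ * Complex.I))) ∧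
    v = ((2 : ℂ)⁻¹) • ((v + Complex.I • vperp) + (v - Complex.I • vperp)) := by
  have hvv : ⟪v, v⟫_ℂ = 1 := by rw [inner_self_eq_norm_sq_to_K, hv]; norm_num
  have hpp : ⟪vperp, vperp⟫_ℂ = 1 := by rw [inner_self_eq_norm_sq_to_K, hvperp]; norm_num
  have hpv : ⟪vperp, v⟫_ℂ = 0 := by rw [← inner_conj_symm, horth]; simp
  have e1 : Complex.exp (2*θ*Complex.I)
      = 2*((Real.cos θ:ℂ)+(Real.sin θ)*Complex.I)*(Real.cos θ) - 1 := by
    rw [show (2*(θ:ℂ)*Complex.I) = ((2*θ:ℝ):ℂ)*Complex.I by push_cast; ring,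
      Complex.exp_mul_I, ← Complex.ofReal_cos, ← Complex.ofReal_sin,
      Real.cos_two_mul, Real.sin_two_mul]
    push_cast; ring
  have e2 : Complex.exp (-(2*θ*Complex.I))
      = 2*((Real.cos θ:ℂ)-(Real.sin θ)*Complex.I)*(Real.cos θ) - 1 := by
    rw [show (-(2*(θ:ℂ)*Complex.I)) = ((-(2*θ):ℝ):ℂ)*Complex.I by push_cast; ring,
      Complex.exp_mul_I, ← Complex.ofReal_cos, ← Complex.ofReal_sin,
      Real.cos_neg, Real.sin_neg, Real.cos_two_mul, Real.sin_two_mul]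
    push_cast; ring
  have key1 : W (v - Complex.I • vperp) =
      Complex.exp (2 * θ * Complex.I) • (v - Complex.I • vperp) := by
    rw [hW, hw]
    simp only [LinearMap.comp_apply, LinearMap.sub_apply, LinearMap.smul_apply,
      LinearMap.id_apply, rankOneProj, LinearMap.coe_mk, AddHom.coe_mk,
      inner_add_left, inner_sub_right, inner_smul_left, inner_smul_right,
      hvv, hpp, hpv, horth, Complex.conj_ofReal, map_one, map_zero,
      mul_one, mul_zero, zero_add, add_zero, sub_zero, zero_sub]
    rw [e1]
    match_scalars
    · ring
    · linear_combination (2*Complex.cos (θ:ℂ)*Complex.sin (θ:ℂ))*Complex.I_sq +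
        (2*Complex.I)*(Complex.sin_sq_add_cos_sq (θ:ℂ))
  have key2 : W (v + Complex.I • vperp) =
      Complex.exp (-(2 * θ * Complex.I)) • (v + Complex.I • vperp) := by
    rw [hW, hw]
    simp only [LinearMap.comp_apply, LinearMap.sub_apply, LinearMap.smul_apply,
      LinearMap.id_apply, rankOneProj, LinearMap.coe_mk, AddHom.coe_mk,
      inner_add_left, inner_add_right, inner_sub_right, inner_smul_left,
      inner_smul_right, one_smul, smul_smul,
      hvv, hpp, hpv, horth, Complex.conj_ofReal, map_one, map_zero,
      mul_one, mul_zero, zero_add, add_zero, sub_zero, zero_sub]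
    rw [e2]
    match_scalars
    · ring
    · linear_combination (2*Complex.cos (θ:ℂ)*Complex.sin (θ:ℂ))*Complex.I_sq +
        (-2*Complex.I)*(Complex.sin_sq_add_cos_sq (θ:ℂ))
  have hne1 : v - Complex.I • vperp ≠ 0 := by
    intro h
    have h0 : ⟪v, v - Complex.I • vperp⟫_ℂ = 0 := by rw [h, inner_zero_right]
    rw [inner_sub_right, inner_smul_right, horth, hvv] at h0
    simp at h0
  have hne2 : v + Complex.I • vperp ≠ 0 := by
    intro h
    have h0 : ⟪v, v + Complex.I • vperp⟫_ℂ = 0 := by rw [h, inner_zero_right]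
    rw [inner_add_right, inner_smul_right, horth, hvv] at h0
    simp at h0
  refine ⟨key1, key2, ?_, ?_, ?_⟩
  · exact Module.End.hasEigenvalue_of_hasEigenvector
      ⟨Module.End.mem_eigenspace_iff.2 key1, hne1⟩
  · exact Module.End.hasEigenvalue_of_hasEigenvector
      ⟨Module.End.mem_eigenspace_iff.2 key2, hne2⟩
  · module
end
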